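/- Let ν be a state with p₀^⊥ T_{t*}(ν) p₀^⊥ = e^{-αt} ν for all t ≥ 0, and define S_{t*} as the semigroup generated by L_{0*} = L_* - ½{p₀^⊥, ·}. Then tr(S_{t*}(ν) p₀^⊥) = e^{-(1+α)t} for all t ≥ 0, via the Dyson expansion S_{t*} = Σ_{k≥0} (-1)^k ∫_{0≤t₁≤⋯≤t_k≤t} T_{(t-t_k)*}(p₀^⊥ ⋯ p₀^⊥ T_{t₁*}(·) p₀^⊥ ⋯ p₀^⊥) dt₁⋯dt_k compressed by p₀^⊥. -/

import Mathlib

set_option linter.unusedSectionVars false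


open Matrix
open scoped ComplexOrder

/-- A linear map on matrices is completely positive if all of its matrix
amplifications preserve positive semidefiniteness. -/
def IsCompletelyPositive {ι : Type*} [Fintype ι] [DecidableEq ι]
    (Φ : Matrix ι ι ℂ →ₗ[ℂ] Matrix ι ι ℂ) : Prop :=
  ∀ (k : ℕ) (M : Matrix (Fin k × ι) (Fin k × ι) ℂ), M.PosSemidef →
    (Matrix.of fun (p q : Fin k × ι) =>
      Φ (Matrix.of fun a b => M (p.1, a) (q.1, b)) p.2 q.2).PosSemidef

namespace SurvivalAux

variable {ι : Type*} [Fintype ι] [DecidableEq ι]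

attribute [local instance] Matrix.normedAddCommGroup Matrix.normedSpace




/-- linear map vanishing on all PSD matrices vanishes -/
lemma eq_zero_of_psd (f : Matrix ι ι ℂ →ₗ[ℂ] Matrix ι ι ℂ)
    (h : ∀ σ : Matrix ι ι ℂ, σ.PosSemidef → f σ = 0) (x : Matrix ι ι ℂ) : f x = 0 := by
  have h1 : ∀ v : ι → ℂ, f (Matrix.of fun i j => v i * star (v j)) = 0 := by
    intro v
    refine h _ ?_
    have hps := Matrix.posSemidef_conjTranspose_mul_self (Matrix.of fun (_ : Fin 1) j => star (v j))
    convert hps using 1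
    ext i j
    simp [Matrix.mul_apply, Matrix.conjTranspose_apply, Fin.sum_univ_one, mul_comm]
  have h2 : ∀ u w : ι → ℂ, f (Matrix.of fun i j => u i * star (w j)) = 0 := by
    intro u w
    have key : (Matrix.of fun i j => u i * star (w j)) =
        (4⁻¹ : ℂ) • ((Matrix.of fun i j => (u + w) i * star ((u + w) j))
          - (Matrix.of fun i j => (u - w) i * star ((u - w) j))
          + Complex.I • (Matrix.of fun i j => (u + Complex.I • w) i * star ((u + Complex.I • w) j))
          - Complex.I • (Matrix.of fun i j => (u - Complex.I • w) i * star ((u - Complex.I • w) j))) := by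
      ext i j
      simp only [Matrix.smul_apply, Matrix.sub_apply, Matrix.add_apply, Matrix.of_apply,
        Pi.add_apply, Pi.sub_apply, Pi.smul_apply, smul_eq_mul, star_add, star_sub, star_mul',
        Complex.star_def, _root_.map_mul, Complex.conj_I]
      ring_nf
      simp only [Complex.I_sq]
      ring
    rw [key, _root_.map_smul f, f.map_sub, f.map_add, f.map_sub, _root_.map_smul f,
      _root_.map_smul f, h1, h1, h1, h1]
    simp
  have h3 : ∀ (i j : ι) (c : ℂ), f (Matrix.single i j c) = 0 := by
    intro i j c
    have key : Matrix.single i j c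
        = c • Matrix.of (fun a b => (Pi.single i (1:ℂ) : ι → ℂ) a * star ((Pi.single j (1:ℂ) : ι → ℂ) b)) := by
      ext a b
      simp only [Matrix.smul_apply, Matrix.of_apply, Pi.single_apply, smul_eq_mul,
        Matrix.single, apply_ite (star : ℂ → ℂ), star_one, star_zero]
      split_ifs <;> simp_all
    rw [key, _root_.map_smul f, h2, smul_zero]
  conv_lhs => rw [matrix_eq_sum_single x]
  simp [map_sum, h3]

lemma dot_zero {n : Type*} [Fintype n] {N : Matrix n n ℂ} (hH : N.IsHermitian)
    {x : n → ℂ} (hx : N *ᵥ x = 0) (y : n → ℂ) : star x ⬝ᵥ N *ᵥ y = 0 := by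
  rw [dotProduct_mulVec]
  have h2 : star x ᵥ* N = 0 := by
    have h3 := congrArg star hx
    rw [star_mulVec, hH.eq] at h3
    simpa using h3
  rw [h2, zero_dotProduct]

/-- PSD corner vanishing: for CP Φ preserving the p-corner, the q-corner of Φ(x)
only depends on the q-corner of x. -/
lemma corner_psd (Φ : Matrix ι ι ℂ →ₗ[ℂ] Matrix ι ι ℂ) (hΦ : IsCompletelyPositive Φ)
    (p : Matrix ι ι ℂ) (hp : p * p = p) (hph : p.IsHermitian)
    (hinv : ∀ ρ, p * ρ * p = ρ → p * Φ ρ * p = Φ ρ) (σ : Matrix ι ι ℂ) (hσ : σ.PosSemidef)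
    (q : Matrix ι ι ℂ) (hq : q = 1 - p) :
    q * Φ (p * σ * q) * q = 0 ∧ q * Φ (q * σ * p) * q = 0 := by
  have hqh : qᴴ = q := by rw [hq]; simp [conjTranspose_sub, hph.eq]
  have hqp : q * p = 0 := by rw [hq, sub_mul, one_mul, hp, sub_self]
  have hpq : p * q = 0 := by rw [hq, mul_sub, mul_one, hp, sub_self]
  -- obtain square root
  obtain ⟨B, hB⟩ : ∃ B : Matrix ι ι ℂ, σ = Bᴴ * B := by
    open scoped MatrixOrder in
    exact CStarAlgebra.nonneg_iff_eq_star_mul_self.mp hσ.nonneg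
  set P : Fin 2 → Matrix ι ι ℂ := ![p, q] with hP
  have hPh : ∀ a, (P a)ᴴ = P a := by
    intro a
    fin_cases a <;> simp [hP, hph.eq, hqh]
  have hC : ∀ a b : Fin 2, (B * P a)ᴴ * (B * P b) = P a * σ * P b := by
    intro a b
    rw [conjTranspose_mul, hPh a, hB]
    simp only [Matrix.mul_assoc]
  set M : Matrix (Fin 2 × ι) (Fin 2 × ι) ℂ :=
    Matrix.of fun r s => (P r.1 * σ * P s.1) r.2 s.2 with hM
  have hMps : M.PosSemidef := by
    have hCM : M = (Matrix.of fun k (s : Fin 2 × ι) => (B * P s.1) k s.2)ᴴ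
        * (Matrix.of fun k (s : Fin 2 × ι) => (B * P s.1) k s.2) := by
      ext ⟨a, i⟩ ⟨b, j⟩
      have h5 : M (a, i) (b, j) = ((B * P a)ᴴ * (B * P b)) i j := by rw [hC]; rfl
      rw [h5]
      simp [Matrix.mul_apply, Matrix.conjTranspose_apply, mul_comm]
    rw [hCM]
    exact Matrix.posSemidef_conjTranspose_mul_self _
  have hN := hΦ 2 M hMps
  set N : Matrix (Fin 2 × ι) (Fin 2 × ι) ℂ :=
    Matrix.of fun (r s : Fin 2 × ι) =>
      Φ (Matrix.of fun a b => M (r.1, a) (s.1, b)) r.2 s.2 with hNdef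
  have hNapp : ∀ (c d : Fin 2) (k l : ι), N (c, k) (d, l) = Φ (P c * σ * P d) k l := by
    intro c d k l
    show Φ (Matrix.of fun a b => M ((c, a)) ((d, b))) k l = _
    congr 1
  -- generic vectors supported on one block
  have hform : ∀ (u w : ι → ℂ) (c d : Fin 2),
      star (fun s : Fin 2 × ι => if s.1 = c then u s.2 else 0) ⬝ᵥ
        N *ᵥ (fun s : Fin 2 × ι => if s.1 = d then w s.2 else 0)
      = ∑ k, ∑ l, star (u k) * (Φ (P c * σ * P d) k l * w l) := by
    intro u w c d
    simp only [dotProduct, Matrix.mulVec, Fintype.sum_prod_type, Pi.star_apply, apply_ite (star : ℂ → ℂ),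
      star_zero, mul_ite, mul_zero, ite_mul, zero_mul, Finset.sum_ite_eq', Finset.mem_univ,
      if_true, dotProduct, hNapp]
    rw [Finset.sum_comm]
    simp [Finset.sum_ite_eq', Finset.mul_sum]
  have hstarq : ∀ k i : ι, star (q k i) = q i k := by
    intro k i
    rw [show q i k = qᴴ i k from by rw [hqh], Matrix.conjTranspose_apply]
  have hentry : ∀ (X : Matrix ι ι ℂ) (i j : ι),
      (∑ k, ∑ l, star (q k i) * (X k l * q l j)) = (q * X * q) i j := by
    intro X i j
    simp only [Matrix.mul_apply, Finset.sum_mul]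
    rw [Finset.sum_comm]
    refine Finset.sum_congr rfl fun k _ => Finset.sum_congr rfl fun l _ => ?_
    rw [hstarq, mul_assoc]
  have hP0 : P 0 = p := rfl
  have hP1 : P 1 = q := rfl
  set xv : ι → (Fin 2 × ι → ℂ) := fun i => fun s => if s.1 = 0 then q s.2 i else 0 with hxv
  have hfix : p * (p * σ * p) * p = p * σ * p := by
    rw [show p * (p * σ * p) * p = p * p * σ * (p * p) by noncomm_ring, hp]
  have hx0 : ∀ i : ι, N *ᵥ (xv i) = 0 := by
    intro i
    apply (hN.dotProduct_mulVec_zero_iff _).mp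
    rw [hxv]
    rw [hform (fun k => q k i) (fun l => q l i) 0 0, hentry, hP0, ← hinv _ hfix,
      show q * (p * Φ (p * σ * p) * p) * q = q * p * Φ (p * σ * p) * (p * q) by noncomm_ring,
      hqp, hpq]
    simp
  constructor
  · ext i j
    have h1 : (q * Φ (p * σ * q) * q) i j
        = star (xv i) ⬝ᵥ N *ᵥ (fun s : Fin 2 × ι => if s.1 = 1 then q s.2 j else 0) := by
      rw [hxv, hform (fun k => q k i) (fun l => q l j) 0 1, hP0, hP1, hentry]
    rw [h1, dot_zero hN.isHermitian (hx0 i)]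
    simp
  · ext i j
    have h1 : (q * Φ (q * σ * p) * q) i j
        = star (fun s : Fin 2 × ι => if s.1 = 1 then q s.2 i else 0) ⬝ᵥ N *ᵥ (xv j) := by
      rw [hxv, hform (fun k => q k i) (fun l => q l j) 1 0, hP1, hP0, hentry]
    rw [h1, hx0 j]
    simp

lemma corner (Φ : Matrix ι ι ℂ →ₗ[ℂ] Matrix ι ι ℂ) (hΦ : IsCompletelyPositive Φ)
    (p : Matrix ι ι ℂ) (hp : p * p = p) (hph : p.IsHermitian)
    (hinv : ∀ ρ, p * ρ * p = ρ → p * Φ ρ * p = Φ ρ) (x : Matrix ι ι ℂ) :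
    (1 - p) * Φ x * (1 - p) = (1 - p) * Φ ((1 - p) * x * (1 - p)) * (1 - p) := by
  set q : Matrix ι ι ℂ := 1 - p with hq
  have hqp : q * p = 0 := by rw [hq, sub_mul, one_mul, hp, sub_self]
  have hpq : p * q = 0 := by rw [hq, mul_sub, mul_one, hp, sub_self]
  have hz1 : ∀ y, q * Φ (p * y * q) * q = 0 := by
    intro y
    have h1 := eq_zero_of_psd
      ((LinearMap.mulLeft ℂ q) ∘ₗ (LinearMap.mulRight ℂ q) ∘ₗ Φ ∘ₗ
        (LinearMap.mulRight ℂ q) ∘ₗ (LinearMap.mulLeft ℂ p))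
      (fun σ hσ => by
        simp only [LinearMap.comp_apply, LinearMap.mulLeft_apply, LinearMap.mulRight_apply]
        rw [← Matrix.mul_assoc]
        exact (corner_psd Φ hΦ p hp hph hinv σ hσ q hq).1) y
    simp only [LinearMap.comp_apply, LinearMap.mulLeft_apply, LinearMap.mulRight_apply] at h1
    rw [← Matrix.mul_assoc] at h1
    exact h1
  have hz2 : ∀ y, q * Φ (q * y * p) * q = 0 := by
    intro y
    have h1 := eq_zero_of_psd
      ((LinearMap.mulLeft ℂ q) ∘ₗ (LinearMap.mulRight ℂ q) ∘ₗ Φ ∘ₗ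
        (LinearMap.mulRight ℂ p) ∘ₗ (LinearMap.mulLeft ℂ q))
      (fun σ hσ => by
        simp only [LinearMap.comp_apply, LinearMap.mulLeft_apply, LinearMap.mulRight_apply]
        rw [← Matrix.mul_assoc]
        exact (corner_psd Φ hΦ p hp hph hinv σ hσ q hq).2) y
    simp only [LinearMap.comp_apply, LinearMap.mulLeft_apply, LinearMap.mulRight_apply] at h1
    rw [← Matrix.mul_assoc] at h1
    exact h1
  have hz0 : ∀ y, q * Φ (p * y * p) * q = 0 := by
    intro y
    have hfix : p * (p * y * p) * p = p * y * p := by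
      rw [show p * (p * y * p) * p = p * p * y * (p * p) by noncomm_ring, hp]
    rw [← hinv _ hfix,
      show q * (p * Φ (p * y * p) * p) * q = q * p * Φ (p * y * p) * (p * q) by noncomm_ring,
      hqp, hpq]
    simp
  have hdecomp : x = p * x * p + p * x * q + q * x * p + q * x * q := by
    rw [hq]; noncomm_ring
  conv_lhs => rw [hdecomp]
  rw [map_add, map_add, map_add]
  rw [show ∀ A B C D : Matrix ι ι ℂ, q * (A + B + C + D) * q
      = q * A * q + q * B * q + q * C * q + q * D * q from fun A B C D => by noncomm_ring]
  rw [hz0, hz1, hz2]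
  simp


/-- Entrywise derivatives give a derivative of a matrix-valued function. -/
lemma hasDerivAt_matrix {f : ℝ → Matrix ι ι ℂ} {f' : Matrix ι ι ℂ} {s : ℝ}
    (h : ∀ i j, HasDerivAt (fun t => f t i j) (f' i j) s) : HasDerivAt f f' s := by
  have h2 : HasDerivAt (fun t => ∑ i, ∑ j, f t i j • Matrix.single i j (1 : ℂ))
      (∑ i, ∑ j, f' i j • Matrix.single i j (1 : ℂ)) s :=
    HasDerivAt.fun_sum fun i _ => HasDerivAt.fun_sum fun j _ => (h i j).smul_const _
  have e1 : ∀ (M : Matrix ι ι ℂ), (∑ i, ∑ j, M i j • Matrix.single i j (1:ℂ)) = M := by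
    intro M
    conv_rhs => rw [matrix_eq_sum_single M]
    simp [smul_single]
  simpa only [e1] using h2

/-- Entrywise derivative of a compression `t ↦ q * F t * q`. -/
lemma hasDerivAt_corner_entry {q : Matrix ι ι ℂ} {F : ℝ → Matrix ι ι ℂ}
    {F' : Matrix ι ι ℂ} {s : ℝ}
    (h : ∀ k l, HasDerivAt (fun t => F t k l) (F' k l) s) (i j : ι) :
    HasDerivAt (fun t => (q * F t * q) i j) ((q * F' * q) i j) s := by
  have e1 : ∀ (M : Matrix ι ι ℂ), (q * M * q) i j = ∑ x, (∑ y, q i y * M y x) * q x j := by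
    intro M; simp [Matrix.mul_apply]
  simp only [e1]
  exact HasDerivAt.fun_sum fun x _ =>
    (HasDerivAt.fun_sum fun y _ => ((h y x).const_mul (q i y))).mul_const (q x j)

end SurvivalAux

open SurvivalAux

attribute [local instance] Matrix.normedAddCommGroup Matrix.normedSpace

/-- If `ν` satisfies `p₀^⊥ T_{t*}(ν) p₀^⊥ = e^{-α t} ν` for all `t ≥ 0`, and
`S_{t*}` is the semigroup generated by `L_{0*} = L_* - ½{p₀^⊥, ·}`, then the
survival probability of the first jump time is exponential with rate `1 + α`:
`tr(S_{t*}(ν) p₀^⊥) = e^{-(1+α) t}`. -/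
theorem survival_function_first_jump {ι : Type*} [Fintype ι] [DecidableEq ι]
    (T S : ℝ → Matrix ι ι ℂ →ₗ[ℂ] Matrix ι ι ℂ)
    (L : Matrix ι ι ℂ →ₗ[ℂ] Matrix ι ι ℂ)
    (hT0 : T 0 = LinearMap.id)
    (hsemT : ∀ t, 0 ≤ t → ∀ s, 0 ≤ s → T (t + s) = (T t).comp (T s))
    (hTP : ∀ t, 0 ≤ t → ∀ x : Matrix ι ι ℂ, (T t x).trace = x.trace)
    (hCP : ∀ t, 0 ≤ t → IsCompletelyPositive (T t))
    -- `L` is the generator of `T` (entrywise derivative)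
    (hgenT : ∀ (x : Matrix ι ι ℂ) (i j : ι) (s : ℝ), 0 ≤ s →
      HasDerivAt (fun t : ℝ => T t x i j) (L (T s x) i j) s)
    (p₀ : Matrix ι ι ℂ) (hproj : p₀ * p₀ = p₀) (hherm : p₀.IsHermitian)
    -- `p₀` is subharmonic: states supported in the range of `p₀` stay there
    (hsub : ∀ t, 0 ≤ t → ∀ ρ : Matrix ι ι ℂ, p₀ * ρ * p₀ = ρ →
      p₀ * T t ρ * p₀ = T t ρ)
    -- `S` is the semigroup generated by `L₀ = L - ½ {p₀^⊥, ·}`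
    (hS0 : S 0 = LinearMap.id)
    (hsemS : ∀ t, 0 ≤ t → ∀ s, 0 ≤ s → S (t + s) = (S t).comp (S s))
    (hgenS : ∀ (x : Matrix ι ι ℂ) (i j : ι) (s : ℝ), 0 ≤ s →
      HasDerivAt (fun t : ℝ => S t x i j)
        ((L (S s x)
          - (1 / 2 : ℂ) • ((1 - p₀) * S s x + S s x * (1 - p₀))) i j) s)
    (ν : Matrix ι ι ℂ) (hν : ν.PosSemidef) (hν1 : ν.trace = 1)
    (hsupp : (1 - p₀) * ν * (1 - p₀) = ν)
    (α : ℝ) (hα : 0 ≤ α)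
    -- `ν` is a quasi-stationary state with rate `α`
    (hQSS : ∀ t, 0 ≤ t →
      (1 - p₀) * T t ν * (1 - p₀) = (Real.exp (-(α * t)) : ℂ) • ν) :
    ∀ t, 0 ≤ t →
      Matrix.trace (S t ν * (1 - p₀)) = (Real.exp (-((1 + α) * t)) : ℂ) := by
  classical
  set q : Matrix ι ι ℂ := 1 - p₀ with hq
  have hqq : q * q = q := by
    rw [hq, show (1 - p₀) * (1 - p₀) = 1 - p₀ - p₀ + p₀ * p₀ by noncomm_ring, hproj]
    noncomm_ring
  have hcornerT : ∀ s, 0 ≤ s → ∀ x, q * T s x * q = q * T s (q * x * q) * q := by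
    intro s hs x
    rw [hq]
    exact corner (T s) (hCP s hs) p₀ hproj hherm (hsub s hs) x
  have hcornerL : ∀ x, q * L x * q = q * L (q * x * q) * q := by
    intro x
    ext i j
    have h1 : HasDerivWithinAt (fun t : ℝ => (q * T t x * q) i j)
        ((q * L x * q) i j) (Set.Ici 0) 0 := by
      have h := hasDerivAt_corner_entry (q := q) (fun k l => hgenT x k l 0 le_rfl) i j
      simp only [hT0, LinearMap.id_coe, id_eq] at h
      exact h.hasDerivWithinAt
    have h2 : HasDerivWithinAt (fun t : ℝ => (q * T t (q * x * q) * q) i j)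
        ((q * L (q * x * q) * q) i j) (Set.Ici 0) 0 := by
      have h := hasDerivAt_corner_entry (q := q) (fun k l => hgenT (q * x * q) k l 0 le_rfl) i j
      simp only [hT0, LinearMap.id_coe, id_eq] at h
      exact h.hasDerivWithinAt
    have h2' : HasDerivWithinAt (fun t : ℝ => (q * T t x * q) i j)
        ((q * L (q * x * q) * q) i j) (Set.Ici 0) 0 :=
      h2.congr (fun s hs => by rw [hcornerT s hs x]) (by rw [hcornerT 0 le_rfl x])
    exact ((uniqueDiffOn_Ici (0:ℝ)) 0 Set.self_mem_Ici).eq_deriv _ h1 h2'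
  have hLν : q * L ν * q = (-α : ℂ) • ν := by
    ext i j
    have h1 : HasDerivWithinAt (fun t : ℝ => (q * T t ν * q) i j)
        ((q * L ν * q) i j) (Set.Ici 0) 0 := by
      have h := hasDerivAt_corner_entry (q := q) (fun k l => hgenT ν k l 0 le_rfl) i j
      simp only [hT0, LinearMap.id_coe, id_eq] at h
      exact h.hasDerivWithinAt
    have hr : HasDerivAt (fun t : ℝ => Real.exp (-(α * t))) (-α) 0 := by
      have h0 : HasDerivAt (fun t : ℝ => -(α * t)) (-α) 0 := by
        simpa using ((hasDerivAt_id (0:ℝ)).const_mul α).fun_neg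
      simpa [Function.comp_def] using (Real.hasDerivAt_exp (-(α * 0))).comp 0 h0
    have h2 : HasDerivWithinAt (fun t : ℝ => (Real.exp (-(α * t)) : ℂ) * ν i j)
        ((-α : ℂ) * ν i j) (Set.Ici 0) 0 := by
      have h := (hr.ofReal_comp).mul_const (ν i j)
      have : ((-α : ℝ) : ℂ) = (-α : ℂ) := by push_cast; ring
      rw [this] at h
      exact h.hasDerivWithinAt
    have h2' : HasDerivWithinAt (fun t : ℝ => (q * T t ν * q) i j)
        ((-α : ℂ) * ν i j) (Set.Ici 0) 0 :=
      h2.congr (fun s hs => by rw [hQSS s hs]; simp) (by rw [hQSS 0 le_rfl]; simp)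
    have := ((uniqueDiffOn_Ici (0:ℝ)) 0 Set.self_mem_Ici).eq_deriv _ h1 h2'
    simpa using this
  intro t ht
  set G₀ : Matrix ι ι ℂ →ₗ[ℂ] Matrix ι ι ℂ :=
    (LinearMap.mulLeft ℂ q) ∘ₗ (LinearMap.mulRight ℂ q) ∘ₗ L - LinearMap.id with hG₀def
  have hG₀ : ∀ x, G₀ x = q * L x * q - x := by
    intro x
    simp [hG₀def, LinearMap.mulLeft_apply, LinearMap.mulRight_apply, Matrix.mul_assoc]
  set G : Matrix ι ι ℂ →L[ℂ] Matrix ι ι ℂ := LinearMap.toContinuousLinearMap G₀ with hGdef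
  have hGapp : ∀ x, G x = q * L x * q - x := hG₀
  set f : ℝ → Matrix ι ι ℂ := fun u => q * S u ν * q with hfdef
  set g : ℝ → Matrix ι ι ℂ := fun u => (Real.exp (-((1 + α) * u)) : ℂ) • ν with hgdef
  have hfD : ∀ s : ℝ, 0 ≤ s → HasDerivAt f (G (f s)) s := by
    intro s hs
    have hD : HasDerivAt f (q * (L (S s ν) - (1/2 : ℂ) • (q * S s ν + S s ν * q)) * q) s :=
      hasDerivAt_matrix fun i j => hasDerivAt_corner_entry (fun k l => hgenS ν k l s hs) i j
    have heq : q * (L (S s ν) - (1/2 : ℂ) • (q * S s ν + S s ν * q)) * q = G (f s) := by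
      rw [hGapp]
      have e1 : q * ((1/2 : ℂ) • (q * S s ν + S s ν * q)) * q = q * S s ν * q := by
        rw [Matrix.mul_smul, Matrix.smul_mul,
          show q * (q * S s ν + S s ν * q) * q
            = q * q * S s ν * q + q * S s ν * (q * q) by noncomm_ring, hqq,
          show q * S s ν * q + q * S s ν * q = (2:ℂ) • (q * S s ν * q) from (two_smul ℂ _).symm,
          smul_smul]
        norm_num
      have e3 : q * (L (S s ν) - (1/2 : ℂ) • (q * S s ν + S s ν * q)) * q
          = q * L (S s ν) * q - q * ((1/2 : ℂ) • (q * S s ν + S s ν * q)) * q := by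
        rw [Matrix.mul_sub q, Matrix.sub_mul _ _ q]
      rw [e3, e1, hcornerL (S s ν)]
    exact heq ▸ hD
  have hgD : ∀ s : ℝ, 0 ≤ s → HasDerivAt g (G (g s)) s := by
    intro s _
    have hr : HasDerivAt (fun u : ℝ => Real.exp (-((1 + α) * u)))
        (-(1 + α) * Real.exp (-((1 + α) * s))) s := by
      have h0 : HasDerivAt (fun u : ℝ => -((1 + α) * u)) (-(1 + α)) s := by
        simpa using ((hasDerivAt_id s).const_mul (1 + α)).fun_neg
      simpa [mul_comm, Function.comp_def] using (Real.hasDerivAt_exp (-((1 + α) * s))).comp s h0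
    have hD : HasDerivAt g (((-(1 + α) * Real.exp (-((1 + α) * s)) : ℝ) : ℂ) • ν) s :=
      (hr.ofReal_comp).smul_const ν
    have heq : ((-(1 + α) * Real.exp (-((1 + α) * s)) : ℝ) : ℂ) • ν = G (g s) := by
      rw [hGapp]
      have e2 : q * L ((Real.exp (-((1 + α) * s)) : ℂ) • ν) * q
          = (Real.exp (-((1 + α) * s)) : ℂ) • (q * L ν * q) := by
        rw [_root_.map_smul, Matrix.mul_smul, Matrix.smul_mul]
      show _ = q * L (g s) * q - g s
      rw [hgdef]
      simp only []
      rw [e2, hLν, smul_smul, ← sub_smul]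
      congr 1
      push_cast
      ring
    exact heq ▸ hD
  have hfc : ContinuousOn f (Set.Icc 0 t) :=
    fun s hs => ((hfD s hs.1).continuousAt).continuousWithinAt
  have hgc : ContinuousOn g (Set.Icc 0 t) :=
    fun s hs => ((hgD s hs.1).continuousAt).continuousWithinAt
  have h0 : f 0 = g 0 := by
    rw [hfdef, hgdef]
    simp only [hS0, LinearMap.id_coe, id_eq]
    rw [hsupp]
    norm_num
  have huniq : f t = g t :=
    ODE_solution_unique (v := fun _ x => G x)
      (fun _ => @ContinuousLinearMap.lipschitz ℂ ℂ (Matrix ι ι ℂ) (Matrix ι ι ℂ)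
        _ _ Matrix.seminormedAddCommGroup Matrix.seminormedAddCommGroup Matrix.normedSpace
        Matrix.normedSpace (RingHom.id ℂ) _ G) hfc (fun s hs => (hfD s hs.1).hasDerivWithinAt)
      hgc (fun s hs => (hgD s hs.1).hasDerivWithinAt) h0 ⟨ht, le_rfl⟩
  have htr : Matrix.trace (S t ν * q) = Matrix.trace (f t) := by
    calc Matrix.trace (S t ν * q) = Matrix.trace (q * S t ν) := Matrix.trace_mul_comm _ _
      _ = Matrix.trace ((q * q) * S t ν) := by rw [hqq]
      _ = Matrix.trace ((q * S t ν) * q) := by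
          rw [Matrix.mul_assoc, Matrix.trace_mul_comm]
      _ = Matrix.trace (f t) := rfl
  rw [htr, huniq, hgdef]
  simp [Matrix.trace_smul, hν1]
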